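/- Let X be a set and H a simple cover of X (a family of subsets whose union is X). Suppose that for every subfamily K ⊆ H there exists J ⊆ K with ∪J = ∪K such that J admits a maximally good coloring. Then H itself admits a maximally good coloring. -/

import Mathlib

open Cardinal

/-- A maximally good coloring of a family `J` of subsets of `X`: the sets of
color `0` cover `⋃₀ J`, and every point of `⋃₀ J` contained in infinitely many
members of `J` sees all ordinals below the cardinality of its set of members
as colors. -/
def MaximallyGood {X : Type u} (J : Set (Set X)) (c : Set X → Ordinal) : Prop :=
  (∀ x ∈ ⋃₀ J, ∃ A ∈ J, x ∈ A ∧ c A = 0) ∧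
  ∀ x ∈ ⋃₀ J, ℵ₀ ≤ #{A | A ∈ J ∧ x ∈ A} →
    ∀ β < (#{A | A ∈ J ∧ x ∈ A}).ord, ∃ A ∈ J, x ∈ A ∧ c A = β

namespace Stmt10Aux

/-- The transfinite recursion producing the decreasing families `K α`:
`K α = H` minus everything already picked at earlier stages. -/
noncomputable def Kfam {X : Type u} (H : Set (Set X))
    (pick : Set (Set X) → Set (Set X)) : Ordinal.{u} → Set (Set X) :=
  Ordinal.lt_wf.fix fun α ih => H \ {A | ∃ β, ∃ h : β < α, A ∈ pick (ih β h)}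

theorem Kfam_eq {X : Type u} (H : Set (Set X))
    (pick : Set (Set X) → Set (Set X)) (α : Ordinal.{u}) :
    Kfam H pick α = H \ {A | ∃ β, ∃ _ : β < α, A ∈ pick (Kfam H pick β)} := by
  exact Ordinal.lt_wf.fix_eq _ _

end Stmt10Aux

/-- If every subfamily `K` of a simple cover `H` of `X` contains a subfamily
`J` with the same union admitting a maximally good coloring, then `H` itself
admits a maximally good coloring. -/
theorem stmt_10 {X : Type u} (H : Set (Set X)) (hcov : ⋃₀ H = Set.univ)
    (hsub : ∀ K ⊆ H, ∃ J ⊆ K, ⋃₀ J = ⋃₀ K ∧ ∃ c, MaximallyGood J c) :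
    ∃ c, MaximallyGood H c := by
  classical
  -- the choice function selecting a well-colorable subfamily with the same union
  set pick : Set (Set X) → Set (Set X) :=
    fun K => if h : K ⊆ H then (hsub K h).choose else ∅ with hpick
  set K : Ordinal.{u} → Set (Set X) := Stmt10Aux.Kfam H pick with hKdef
  set J : Ordinal.{u} → Set (Set X) := fun α => pick (K α) with hJdef
  have hKeq : ∀ α, K α = H \ {A | ∃ β, ∃ _ : β < α, A ∈ J β} := by
    intro α
    rw [hKdef]
    exact Stmt10Aux.Kfam_eq H pick α
  have hKsub : ∀ α, K α ⊆ H := by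
    intro α
    rw [hKeq α]
    exact Set.diff_subset
  have hJspec : ∀ α, J α ⊆ K α ∧ ⋃₀ J α = ⋃₀ K α ∧ ∃ c, MaximallyGood (J α) c := by
    intro α
    have : J α = (hsub (K α) (hKsub α)).choose := by
      rw [hJdef]
      simp only [hpick, dif_pos (hKsub α)]
    rw [this]
    exact (hsub (K α) (hKsub α)).choose_spec
  have hJK : ∀ α, J α ⊆ K α := fun α => (hJspec α).1
  have hJU : ∀ α, ⋃₀ J α = ⋃₀ K α := fun α => (hJspec α).2.1
  choose cfun hcfun using fun α => (hJspec α).2.2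
  -- K is antitone
  have hKmono : ∀ {β α : Ordinal.{u}}, β ≤ α → K α ⊆ K β := by
    intro β α hβα A hA
    rw [hKeq α] at hA
    rw [hKeq β]
    exact ⟨hA.1, fun ⟨δ, hδ, hm⟩ => hA.2 ⟨δ, hδ.trans_le hβα, hm⟩⟩
  -- the J's are pairwise disjoint
  have hJdisj : ∀ {α β : Ordinal.{u}} {A : Set X}, A ∈ J α → A ∈ J β → α = β := by
    intro α β A hα hβ
    by_contra hne
    rcases lt_or_gt_of_ne hne with h | h
    · have := hJK β hβ
      rw [hKeq β] at this
      exact this.2 ⟨α, h, hα⟩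
    · have := hJK α hα
      rw [hKeq α] at this
      exact this.2 ⟨β, h, hβ⟩
  have hK0 : K 0 = H := by
    rw [hKeq 0]
    have : {A : Set X | ∃ β, ∃ _ : β < (0 : Ordinal.{u}), A ∈ J β} = ∅ := by
      ext A
      simp only [Set.mem_setOf_eq, Set.mem_empty_iff_false, iff_false]
      rintro ⟨β, hβ, -⟩
      exact (not_lt_zero hβ).elim
    rw [this, Set.diff_empty]
  -- the global coloring
  set c : Set X → Ordinal.{u} := fun A =>
    if h : ∃ α, A ∈ J α then
      (if cfun h.choose A = 0 then h.choose else cfun h.choose A)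
    else 0 with hcdef
  have hcval : ∀ {α : Ordinal.{u}} {A : Set X}, A ∈ J α →
      c A = if cfun α A = 0 then α else cfun α A := by
    intro α A hA
    have hex : ∃ α, A ∈ J α := ⟨α, hA⟩
    have heq : hex.choose = α := hJdisj hex.choose_spec hA
    rw [hcdef]
    simp only [dif_pos hex, heq]
  -- members of a stage
  have hstage : ∀ (x : X) (α : Ordinal.{u}), x ∈ ⋃₀ K α → x ∈ ⋃₀ J α := by
    intro x α hx
    rw [hJU α]
    exact hx
  -- cardinal bound on stages through a point
  have hbound : ∀ (x : X) (α : Ordinal.{u}), x ∈ ⋃₀ K α →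
      α.card ≤ #{A | A ∈ H ∧ x ∈ A} := by
    intro x α hx
    have hx' : ∀ β : Set.Iio α, ∃ A, A ∈ J β.1 ∧ x ∈ A := by
      rintro ⟨β, hβ⟩
      have : x ∈ ⋃₀ K β := Set.sUnion_subset_sUnion (hKmono hβ.le) hx
      obtain ⟨A, hA, hxA⟩ := hstage x β this
      exact ⟨A, hA, hxA⟩
    choose f hf1 hf2 using hx'
    let e := Ordinal.ToType.mk (o := α)
    let g : α.ToType → {A : Set X | A ∈ H ∧ x ∈ A} := fun i =>
      ⟨f (e.symm i), hKsub _ (hJK _ (hf1 (e.symm i))), hf2 (e.symm i)⟩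
    have hg : Function.Injective g := by
      intro i j hij
      have : f (e.symm i) = f (e.symm j) := congrArg Subtype.val hij
      have h2 : (e.symm i : Set.Iio α).1 = (e.symm j : Set.Iio α).1 := by
        apply hJdisj (hf1 (e.symm i))
        rw [this]
        exact hf1 (e.symm j)
      have : e.symm i = e.symm j := Subtype.ext h2
      exact e.symm.injective this
    calc α.card = #α.ToType := (Cardinal.mk_toType α).symm
      _ ≤ #{A | A ∈ H ∧ x ∈ A} := Cardinal.mk_le_of_injective hg
  -- the length of the process at a point
  have hlamset : ∀ x : X, {α : Ordinal.{u} | x ∉ ⋃₀ K α}.Nonempty := by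
    intro x
    by_contra h
    rw [Set.not_nonempty_iff_eq_empty] at h
    have hall : ∀ α : Ordinal.{u}, x ∈ ⋃₀ K α := by
      intro α
      by_contra hx
      rw [Set.eq_empty_iff_forall_notMem] at h; exact h α hx
    have h1 := hbound x (Order.succ #(Set X)).ord (hall _)
    rw [Cardinal.card_ord] at h1
    have h2 : #{A | A ∈ H ∧ x ∈ A} ≤ #(Set X) := Cardinal.mk_set_le _
    exact absurd (h1.trans h2) (Order.lt_succ #(Set X)).not_ge
  set lam : X → Ordinal.{u} := fun x => sInf {α | x ∉ ⋃₀ K α} with hlamdef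
  have hlam_iff : ∀ (x : X) (α : Ordinal.{u}), x ∈ ⋃₀ K α ↔ α < lam x := by
    intro x α
    constructor
    · intro hx
      by_contra h
      push_neg at h
      have hmem := csInf_mem (hlamset x)
      exact hmem (Set.sUnion_subset_sUnion (hKmono h) hx)
    · intro h
      by_contra hx
      exact absurd (csInf_le' (s := {α | x ∉ ⋃₀ K α}) hx) h.not_ge
  -- every member of H through x lies in some stage below lam x
  have hcover : ∀ (x : X) (A : Set X), A ∈ H → x ∈ A → ∃ α < lam x, A ∈ J α := by
    intro x A hA hxA
    have h1 : ∃ α, A ∈ J α := by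
      by_contra h
      push_neg at h
      have hAK : A ∈ K (lam x) := by
        rw [hKeq]
        exact ⟨hA, fun ⟨β, _, hm⟩ => h β hm⟩
      have : x ∈ ⋃₀ K (lam x) := ⟨A, hAK, hxA⟩
      rw [hlam_iff] at this
      exact lt_irrefl _ this
    obtain ⟨α, hα⟩ := h1
    have hxK : x ∈ ⋃₀ K α := ⟨A, hJK α hα, hxA⟩
    rw [hlam_iff] at hxK
    exact ⟨α, hxK, hα⟩
  -- lam x is positive for every x
  have hlam_pos : ∀ x : X, 0 < lam x := by
    intro x
    rw [← hlam_iff, hK0, hcov]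
    exact Set.mem_univ x
  -- stage-wise point covers: every point of ⋃₀ K α gets color α from a 0-colored set
  have hzero : ∀ (x : X) (α : Ordinal.{u}), α < lam x →
      ∃ A ∈ H, x ∈ A ∧ c A = α := by
    intro x α hα
    have hx : x ∈ ⋃₀ J α := hstage x α ((hlam_iff x α).2 hα)
    obtain ⟨A, hA, hxA, hcA⟩ := (hcfun α).1 x hx
    refine ⟨A, hKsub α (hJK α hA), hxA, ?_⟩
    rw [hcval hA, hcA, if_pos rfl]
  -- main construction
  refine ⟨c, ?_, ?_⟩
  · intro x hx
    obtain ⟨A, hA, hxA, hcA⟩ := hzero x 0 (hlam_pos x)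
    exact ⟨A, hA, hxA, hcA⟩
  · intro x hx hinf γ hγ
    rcases lt_or_ge γ (lam x) with hcase | hcase
    · exact hzero x γ hcase
    · -- γ ≥ lam x : find a single stage with many sets through x
      have hγ0 : γ ≠ 0 := by
        intro h
        rw [h] at hcase
        exact absurd (hlam_pos x) hcase.not_gt
      have key : ∃ α < lam x, ℵ₀ ≤ #{A | A ∈ J α ∧ x ∈ A} ∧
          γ < (#{A | A ∈ J α ∧ x ∈ A}).ord := by
        by_contra hcon
        push_neg at hcon
        -- set up the covering of {A | A ∈ H ∧ x ∈ A} by the stages below lam x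
        set lx := lam x with hlx
        let e := Ordinal.ToType.mk (o := lx)
        set T : lx.ToType → Set (Set X) :=
          fun i => {A | A ∈ J (e.symm i : Set.Iio lx).1 ∧ x ∈ A} with hT
        have hTcov : {A : Set X | A ∈ H ∧ x ∈ A} ⊆ ⋃ i, T i := by
          rintro A ⟨hA, hxA⟩
          obtain ⟨α, hα, hJα⟩ := hcover x A hA hxA
          refine Set.mem_iUnion.2 ⟨e ⟨α, hα⟩, ?_⟩
          rw [hT]
          have : (e.symm (e ⟨α, hα⟩) : Set.Iio lx).1 = α := by
            rw [e.symm_apply_apply]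
          simp only [Set.mem_setOf_eq, this]
          exact ⟨hJα, hxA⟩
        have hbig : #{A : Set X | A ∈ H ∧ x ∈ A} ≤ lx.card * ⨆ i, #(T i) := by
          calc #{A : Set X | A ∈ H ∧ x ∈ A} ≤ #(⋃ i, T i) :=
                Cardinal.mk_le_mk_of_subset hTcov
            _ ≤ #lx.ToType * ⨆ i, #(T i) := Cardinal.mk_iUnion_le T
            _ = lx.card * ⨆ i, #(T i) := by rw [Cardinal.mk_toType]
        rcases lt_or_ge γ.card ℵ₀ with hfin | hinfγ
        · -- γ finite: all stages are finite and there are finitely many, contradiction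
          have hγω : γ < Ordinal.omega0 := by
            rw [← Cardinal.ord_aleph0]
            exact Cardinal.lt_ord.2 hfin
          have hlxfin : Finite lx.ToType := by
            rw [← Cardinal.mk_lt_aleph0_iff, Cardinal.mk_toType]
            exact (Ordinal.card_le_card hcase).trans_lt hfin
          have hTfin : ∀ i, (T i).Finite := by
            intro i
            rw [← Cardinal.lt_aleph0_iff_set_finite]
            by_contra hTi
            push_neg at hTi
            have hα := (e.symm i : Set.Iio lx).2
            have := hcon _ hα hTi
            have hω : Ordinal.omega0 ≤ (#(T i)).ord := by
              rw [← Cardinal.ord_aleph0]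
              exact Cardinal.ord_le_ord.2 hTi
            exact absurd (hγω.trans_le hω) (not_lt.2 this)
          have : {A : Set X | A ∈ H ∧ x ∈ A}.Finite :=
            Set.Finite.subset (Set.finite_iUnion hTfin) hTcov
          rw [← Cardinal.lt_aleph0_iff_set_finite] at this
          exact absurd hinf this.not_ge
        · -- γ infinite: every stage has at most γ.card sets, contradiction
          have hTle : ∀ i, #(T i) ≤ γ.card := by
            intro i
            rcases lt_or_ge (#(T i)) ℵ₀ with h | h
            · exact h.le.trans hinfγ
            · have hα := (e.symm i : Set.Iio lx).2
              have hord := hcon _ hα h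
              have := Ordinal.card_le_card hord
              rwa [Cardinal.card_ord] at this
          have hlxle : lx.card ≤ γ.card := Ordinal.card_le_card hcase
          have : #{A : Set X | A ∈ H ∧ x ∈ A} ≤ γ.card := by
            calc #{A : Set X | A ∈ H ∧ x ∈ A} ≤ lx.card * ⨆ i, #(T i) := hbig
              _ ≤ γ.card * γ.card := by
                  apply mul_le_mul' hlxle
                  exact ciSup_le' hTle
              _ = γ.card := Cardinal.mul_eq_self hinfγ
          have hlt : γ.card < #{A : Set X | A ∈ H ∧ x ∈ A} := Cardinal.lt_ord.1 hγ
          exact absurd this hlt.not_ge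
      obtain ⟨α, hα, hαinf, hγα⟩ := key
      have hxJ : x ∈ ⋃₀ J α := hstage x α ((hlam_iff x α).2 hα)
      obtain ⟨A, hA, hxA, hcA⟩ := (hcfun α).2 x hxJ hαinf γ hγα
      refine ⟨A, hKsub α (hJK α hA), hxA, ?_⟩
      rw [hcval hA, hcA, if_neg hγ0]
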